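/- Let 0 ≤ α ≤ β be reals and let Δ : ℝ → ℝ satisfy Δ(0) = 0 and be slope-restricted on [α,β], i.e. α(x−y)² ≤ (Δ(x)−Δ(y))(x−y) ≤ β(x−y)² for all x, y ∈ ℝ. Fix ρ ∈ (0,1], an integer j ≥ 1, and a sequence y : ℕ → ℝ. Define ũ_k = Δ(y_k) − α y_k for k ≥ 0, and define ỹ : ℤ → ℝ by ỹ_k = β y_k − Δ(y_k) for k ≥ 0 and ỹ_k = 0 for k < 0. Then for every T ∈ ℕ, ∑_{k=0}^{T} ρ^{-2k} ũ_k (ỹ_k − ρ^{2j} ỹ_{k−j}) ≥ 0. -/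

import Mathlib

open intervalIntegral

private lemma zf_lin_int (L : ℝ) (a b c₀ : ℝ) :
    (∫ t in a..b, (c₀ + L * t)) = c₀ * (b - a) + L * ((b ^ 2 - a ^ 2) / 2) := by
  rw [integral_add (g := fun t => L * t) (_root_.intervalIntegrable_const (c := c₀))
    ((continuous_const.mul continuous_id').intervalIntegrable _ _)]
  rw [integral_const, integral_const_mul, integral_id]
  simp [smul_eq_mul, mul_comm]

private lemma zf_key_coco (L : ℝ) (hL : 0 < L) (φ : ℝ → ℝ) (hmono : Monotone φ)
    (hs : ∀ a b : ℝ, (φ a - φ b) * (a - b) ≤ L * (a - b) ^ 2) (x z : ℝ) :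
    (φ z - φ x) ^ 2 / (2 * L) ≤ (∫ t in x..z, φ t) - φ x * (z - x) := by
  rcases le_or_gt x z with hxz | hxz
  · rcases eq_or_lt_of_le hxz with rfl | hlt
    · simp
    set δ : ℝ := φ z - φ x with hδdef
    have hδ0 : 0 ≤ δ := sub_nonneg.2 (hmono hxz)
    have hδL : δ ≤ L * (z - x) := by
      have h1 := hs z x
      have h2 : δ * (z - x) ≤ (L * (z - x)) * (z - x) := by nlinarith
      exact le_of_mul_le_mul_right h2 (sub_pos.2 hlt)
    set m : ℝ := z - δ / L with hmdef
    have hzm : z - m = δ / L := by rw [hmdef]; ring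
    have hxm : x ≤ m := by
      rw [hmdef]
      have : δ / L ≤ z - x := (div_le_iff₀ hL).2 (by linarith)
      linarith
    have hmz : m ≤ z := by
      have : 0 ≤ δ / L := div_nonneg hδ0 hL.le
      rw [hmdef]; linarith
    have hint_split : (∫ t in x..z, φ t) = (∫ t in x..m, φ t) + ∫ t in m..z, φ t :=
      (integral_add_adjacent_intervals hmono.intervalIntegrable hmono.intervalIntegrable).symm
    have hint1 : φ x * (m - x) ≤ ∫ t in x..m, φ t := by
      have h := integral_mono_on (μ := MeasureTheory.volume) hxm
        (_root_.intervalIntegrable_const (c := φ x)) hmono.intervalIntegrable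
        (fun t ht => hmono ht.1)
      rw [integral_const, smul_eq_mul] at h
      linarith [h]
    have hint2 : (∫ t in m..z, ((φ z - L * z) + L * t)) ≤ ∫ t in m..z, φ t := by
      apply integral_mono_on hmz
        ((continuous_const.add (continuous_const.mul continuous_id')).intervalIntegrable _ _)
        hmono.intervalIntegrable
      intro t ht
      rcases eq_or_lt_of_le ht.2 with rfl | htz
      · simp
      · have h1 := hs z t
        have h2 : (φ z - φ t) * (z - t) ≤ (L * (z - t)) * (z - t) := by nlinarith
        have h3 : φ z - φ t ≤ L * (z - t) := le_of_mul_le_mul_right h2 (sub_pos.2 htz)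
        simp only [Pi.add_apply, Pi.mul_apply]
        linarith
    have hval : (∫ t in m..z, ((φ z - L * z) + L * t))
        = δ ^ 2 / (2 * L) + φ x * (z - m) := by
      rw [zf_lin_int, hmdef, hδdef]
      field_simp
      ring
    have hring : φ x * (m - x) + φ x * (z - m) - φ x * (z - x) = 0 := by ring
    clear_value δ m
    rw [hint_split]
    linarith [hint1, hint2, hval, hring]
  · set d : ℝ := φ x - φ z with hddef
    have hd0 : 0 ≤ d := sub_nonneg.2 (hmono hxz.le)
    have hdL : d ≤ L * (x - z) := by
      have h1 := hs x z
      have h2 : d * (x - z) ≤ (L * (x - z)) * (x - z) := by nlinarith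
      exact le_of_mul_le_mul_right h2 (sub_pos.2 hxz)
    set m : ℝ := z + d / L with hmdef
    have hmz : m - z = d / L := by rw [hmdef]; ring
    have hzm : z ≤ m := by
      have : 0 ≤ d / L := div_nonneg hd0 hL.le
      rw [hmdef]; linarith
    have hmx : m ≤ x := by
      rw [hmdef]
      have : d / L ≤ x - z := (div_le_iff₀ hL).2 (by linarith)
      linarith
    have hint_split : (∫ t in z..x, φ t) = (∫ t in z..m, φ t) + ∫ t in m..x, φ t :=
      (integral_add_adjacent_intervals hmono.intervalIntegrable hmono.intervalIntegrable).symm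
    have hint1 : (∫ t in m..x, φ t) ≤ φ x * (x - m) := by
      have h := integral_mono_on (μ := MeasureTheory.volume) hmx
        hmono.intervalIntegrable (_root_.intervalIntegrable_const (c := φ x))
        (fun t ht => hmono ht.2)
      rw [integral_const, smul_eq_mul] at h
      linarith [h]
    have hint2 : (∫ t in z..m, φ t) ≤ ∫ t in z..m, ((φ z - L * z) + L * t) := by
      apply integral_mono_on hzm hmono.intervalIntegrable
        ((continuous_const.add (continuous_const.mul continuous_id')).intervalIntegrable _ _)
      intro t ht
      rcases eq_or_lt_of_le ht.1 with rfl | hzt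
      · simp
      · have h1 := hs t z
        have h2 : (φ t - φ z) * (t - z) ≤ (L * (t - z)) * (t - z) := by nlinarith
        have h3 : φ t - φ z ≤ L * (t - z) := le_of_mul_le_mul_right h2 (sub_pos.2 hzt)
        simp only [Pi.add_apply, Pi.mul_apply]
        linarith
    have hval : (∫ t in z..m, ((φ z - L * z) + L * t))
        = φ x * (m - z) - d ^ 2 / (2 * L) := by
      rw [zf_lin_int, hmdef, hddef]
      field_simp
      ring
    have hsymm : (∫ t in x..z, φ t) = - ∫ t in z..x, φ t := integral_symm z x
    have hfin : (φ z - φ x) ^ 2 / (2 * L) = d ^ 2 / (2 * L) := by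
      rw [hddef]; ring_nf
    have hring : φ x * (m - z) + φ x * (x - m) + φ x * (z - x) = 0 := by ring
    clear_value d m
    rw [hsymm, hint_split, hfin]
    linarith [hint1, hint2, hval, hring]

/-- Scalar time-domain form of the off-by-`j` Zames–Falb ρ-IQC for a static
nonlinearity `Δ : ℝ → ℝ` that is slope-restricted on `[α,β]`.  Here `ỹ` (`ytil`)
is the zero-extension to `ℤ` of `k ↦ β y_k − Δ(y_k)` and `ũ_k = Δ(y_k) − α y_k`. -/
theorem off_by_j_zames_falb_rho_iqc_scalar
    (α β : ℝ) (hα : 0 ≤ α) (hαβ : α ≤ β)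
    (Δ : ℝ → ℝ) (hΔ_zero : Δ 0 = 0)
    (hslope : ∀ x y : ℝ,
      α * (x - y) ^ 2 ≤ (Δ x - Δ y) * (x - y) ∧ (Δ x - Δ y) * (x - y) ≤ β * (x - y) ^ 2)
    (ρ : ℝ) (hρ : ρ ∈ Set.Ioc (0 : ℝ) 1)
    (j : ℕ) (hj : 1 ≤ j)
    (y : ℕ → ℝ) (ytil : ℤ → ℝ)
    (hytil_nat : ∀ k : ℕ, ytil (k : ℤ) = β * y k - Δ (y k))
    (hytil_neg : ∀ k : ℤ, k < 0 → ytil k = 0)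
    (T : ℕ) :
    0 ≤ ∑ k ∈ Finset.range (T + 1),
        ρ ^ (-(2 * (k : ℤ))) *
          ((Δ (y k) - α * y k) * (ytil (k : ℤ) - ρ ^ (2 * j) * ytil ((k : ℤ) - (j : ℤ)))) := by
  obtain ⟨hρ0, hρ1⟩ := hρ
  rcases eq_or_lt_of_le hαβ with heq | hL
  · -- degenerate case α = β : the nonlinearity is exactly linear, every term vanishes
    apply Finset.sum_nonneg
    intro k _
    have hzero : Δ (y k) - α * y k = 0 := by
      rcases eq_or_ne (y k) 0 with h0 | h0
      · rw [h0, hΔ_zero]; ring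
      · have h1 := (hslope (y k) 0).1
        have h2 := (hslope (y k) 0).2
        rw [← heq] at h2
        rw [hΔ_zero] at h1 h2
        have h3 : (Δ (y k) - α * y k) * y k = 0 := by
          apply le_antisymm <;> nlinarith
        exact (mul_eq_zero.1 h3).resolve_right h0
    rw [hzero]
    simp
  · set L : ℝ := β - α with hLdef
    have hL0 : 0 < L := by rw [hLdef]; linarith
    set φ : ℝ → ℝ := fun t => Δ t - α * t with hφdef
    have hφ0 : φ 0 = 0 := by simp [hφdef, hΔ_zero]
    have hmono : Monotone φ := by
      intro a b hab
      rcases eq_or_lt_of_le hab with rfl | hlt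
      · exact le_refl _
      · have h1 := (hslope b a).1
        have h2 : 0 ≤ (φ b - φ a) * (b - a) := by
          simp only [hφdef]
          nlinarith
        nlinarith
    have hs : ∀ a b : ℝ, (φ a - φ b) * (a - b) ≤ L * (a - b) ^ 2 := by
      intro a b
      have h1 := (hslope a b).1
      have h2 := (hslope a b).2
      simp only [hφdef, hLdef]
      nlinarith
    set Φ : ℝ → ℝ := fun x => ∫ t in (0:ℝ)..x, φ t with hΦdef
    have hkey : ∀ x z : ℝ,
        (φ z - φ x) ^ 2 / (2 * L) ≤ (Φ z - Φ x) - φ x * (z - x) := by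
      intro x z
      have h := zf_key_coco L hL0 φ hmono hs x z
      have hsub : Φ z - Φ x = ∫ t in x..z, φ t := by
        rw [hΦdef]
        exact integral_interval_sub_left hmono.intervalIntegrable hmono.intervalIntegrable
      rw [hsub]
      exact h
    have hdiv : ∀ c : ℝ, L * (c / (2 * L)) = c / 2 := by
      intro c; field_simp
    -- G and H potentials
    have hH : ∀ x : ℝ, 0 ≤ L * Φ x - (φ x) ^ 2 / 2 := by
      intro x
      have h := hkey 0 x
      rw [hφ0] at h
      have hΦ0 : Φ 0 = 0 := by simp [hΦdef]
      rw [hΦ0] at h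
      have h2 := mul_le_mul_of_nonneg_left h hL0.le
      rw [hdiv] at h2
      have h3 : (φ x - 0) ^ 2 = (φ x) ^ 2 := by ring
      rw [h3] at h2
      nlinarith [h2]
    have hG : ∀ x : ℝ, 0 ≤ L * (x * φ x - Φ x) - (φ x) ^ 2 / 2 := by
      intro x
      have h := hkey x 0
      rw [hφ0] at h
      have hΦ0 : Φ 0 = 0 := by simp [hΦdef]
      rw [hΦ0] at h
      have h2 := mul_le_mul_of_nonneg_left h hL0.le
      rw [hdiv] at h2
      nlinarith [h2]
    have hcross : ∀ x z : ℝ, φ x * (L * z - φ z) ≤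
        (L * (x * φ x - Φ x) - (φ x) ^ 2 / 2) + (L * Φ z - (φ z) ^ 2 / 2) := by
      intro x z
      have h := hkey x z
      have h2 := mul_le_mul_of_nonneg_left h hL0.le
      rw [hdiv] at h2
      nlinarith [h2]
    have hid : ∀ x : ℝ,
        (L * (x * φ x - Φ x) - (φ x) ^ 2 / 2) + (L * Φ x - (φ x) ^ 2 / 2)
          = φ x * (L * x - φ x) := by
      intro x; ring
    -- weights
    set c : ℕ → ℝ := fun k => ρ ^ (-(2 * (k : ℤ))) with hcdef
    have hcpos : ∀ k : ℕ, 0 < c k := fun k => zpow_pos hρ0 _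
    have hcmul : ∀ k : ℕ, j ≤ k → c k * ρ ^ (2 * j) = c (k - j) := by
      intro k hjk
      rw [hcdef]
      simp only
      rw [← zpow_natCast ρ (2 * j), ← zpow_add₀ hρ0.ne']
      congr 1
      have hcast : ((k - j : ℕ) : ℤ) = (k : ℤ) - (j : ℤ) := by omega
      rw [hcast]
      push_cast
      ring
    have hcmono : ∀ k : ℕ, j ≤ k → c (k - j) ≤ c k := by
      intro k hjk
      apply zpow_le_zpow_right_of_le_one₀ hρ0 hρ1
      have hcast : ((k - j : ℕ) : ℤ) = (k : ℤ) - (j : ℤ) := by omega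
      omega
    -- the telescoping sequence
    set e : ℕ → ℝ := fun k => c k * (L * Φ (y k) - (φ (y k)) ^ 2 / 2) with hedef
    have he0 : ∀ k, 0 ≤ e k := fun k => mul_nonneg (hcpos k).le (hH _)
    -- term-wise bound
    have hterm : ∀ k : ℕ,
        e k - (if j ≤ k then e (k - j) else 0) ≤
          c k * ((Δ (y k) - α * y k) *
            (ytil (k : ℤ) - ρ ^ (2 * j) * ytil ((k : ℤ) - (j : ℤ)))) := by
      intro k
      have hyk : ytil (k : ℤ) = L * y k - φ (y k) := by
        rw [hytil_nat k, hLdef, hφdef]; ring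
      have hφyk : Δ (y k) - α * y k = φ (y k) := rfl
      by_cases hjk : j ≤ k
      · have hki : ((k : ℤ) - (j : ℤ)) = ((k - j : ℕ) : ℤ) := by omega
        have hykj : ytil ((k : ℤ) - (j : ℤ)) = L * y (k - j) - φ (y (k - j)) := by
          rw [hki, hytil_nat (k - j), hLdef, hφdef]; ring
        rw [if_pos hjk, hyk, hykj, hφyk]
        have hexp : c k * (φ (y k) *
            ((L * y k - φ (y k)) - ρ ^ (2 * j) * (L * y (k - j) - φ (y (k - j)))))
            = c k * (φ (y k) * (L * y k - φ (y k)))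
              - (c k * ρ ^ (2 * j)) * (φ (y k) * (L * y (k - j) - φ (y (k - j)))) := by
          ring
        rw [hexp, hcmul k hjk]
        have h1 : c k * (φ (y k) * (L * y k - φ (y k)))
            = c k * (L * (y k * φ (y k) - Φ (y k)) - (φ (y k)) ^ 2 / 2)
              + c k * (L * Φ (y k) - (φ (y k)) ^ 2 / 2) := by
          rw [← mul_add, hid (y k)]
        have h2 := mul_le_mul_of_nonneg_left (hcross (y k) (y (k - j))) (hcpos (k - j)).le
        rw [mul_add] at h2
        have h3 := mul_le_mul_of_nonneg_right (hcmono k hjk) (hG (y k))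
        rw [hedef]
        simp only
        linarith [h1, h2, h3]
      · have hneg : ytil ((k : ℤ) - (j : ℤ)) = 0 := by
          apply hytil_neg
          omega
        rw [if_neg hjk, hneg, hyk, hφyk]
        have h1 : c k * (φ (y k) * (L * y k - φ (y k) - ρ ^ (2 * j) * 0))
            = c k * (L * (y k * φ (y k) - Φ (y k)) - (φ (y k)) ^ 2 / 2)
              + c k * (L * Φ (y k) - (φ (y k)) ^ 2 / 2) := by
          rw [← mul_add, hid (y k)]; ring
        have h2 : 0 ≤ c k * (L * (y k * φ (y k) - Φ (y k)) - (φ (y k)) ^ 2 / 2) :=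
          mul_nonneg (hcpos k).le (hG (y k))
        rw [hedef]
        simp only
        linarith [h1, h2]
    -- sum up
    have hsum1 : ∑ k ∈ Finset.range (T + 1), (e k - if j ≤ k then e (k - j) else 0)
        ≤ ∑ k ∈ Finset.range (T + 1),
            c k * ((Δ (y k) - α * y k) *
              (ytil (k : ℤ) - ρ ^ (2 * j) * ytil ((k : ℤ) - (j : ℤ)))) :=
      Finset.sum_le_sum fun k _ => hterm k
    have hsum2 : (0 : ℝ) ≤ ∑ k ∈ Finset.range (T + 1),
        (e k - if j ≤ k then e (k - j) else 0) := by
      rw [Finset.sum_sub_distrib]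
      have hfil : (∑ k ∈ Finset.range (T + 1), if j ≤ k then e (k - j) else 0)
          = ∑ k ∈ Finset.Ico j (T + 1), e (k - j) := by
        rw [← Finset.sum_filter]
        congr 1
        ext a
        simp [Finset.mem_filter, Finset.mem_range, Finset.mem_Ico]
        omega
      rw [hfil, Finset.sum_Ico_eq_sum_range]
      have hre : ∀ i, e (j + i - j) = e i := fun i => by
        congr 1; omega
      rw [Finset.sum_congr rfl fun i _ => hre i]
      have hsub : Finset.range (T + 1 - j) ⊆ Finset.range (T + 1) :=
        Finset.range_subset_range.2 (by omega)
      have := Finset.sum_le_sum_of_subset_of_nonneg hsub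
        (fun i _ _ => he0 i)
      linarith [this]
    calc (0:ℝ) ≤ _ := hsum2
      _ ≤ _ := hsum1
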